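/- Let G be a σ-pro-p-group, let N be a σ-invariant open normal subgroup of G, and let ε ∈ {+1,−1}. Then the projection G → G/N restricts to a surjective map G^ε → (G/N)^ε, the preimage in G^ε of each single element of (G/N)^ε has μ_{G^ε}-measure equal to μ_{G^ε}(N^ε), and μ_{G^ε}(N^ε) > 0. -/

import Mathlib

open MeasureTheory

private lemma oddB {Q : Type*} [Group Q] [Finite Q] (hodd : Odd (Nat.card Q))
    (τ : Q →* Q) (hτ : ∀ x, τ (τ x) = x) :
    ∃ B : Q → Q,
      (∀ a b : Q, τ a = a → τ b = b⁻¹ → B (a * b) = b) ∧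
      (∀ y, B y = 1 → τ y = y) ∧
      (∀ y, τ (y * (B y)⁻¹) = y * (B y)⁻¹) := by
  obtain ⟨j, hj⟩ := hodd
  set k := j + 1 with hk
  have h2k : 2 * k = Nat.card Q + 1 := by omega
  refine ⟨fun y => ((τ y)⁻¹ * y) ^ k, ?_, ?_, ?_⟩
  · intro a b ha hb
    have h1 : (τ (a * b))⁻¹ * (a * b) = b * b := by
      rw [map_mul, ha, hb]; group
    show ((τ (a * b))⁻¹ * (a * b)) ^ k = b
    rw [h1, ← pow_two, ← pow_mul, h2k, pow_succ, pow_card_eq_one', one_mul]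
  · intro y hy
    have hy' : ((τ y)⁻¹ * y) ^ k = 1 := hy
    have h1 : ((τ y)⁻¹ * y) ^ (2 * k) = 1 := by
      rw [mul_comm 2 k, pow_mul, hy', one_pow]
    rw [h2k, pow_succ, pow_card_eq_one', one_mul] at h1
    exact inv_mul_eq_one.mp h1
  · intro y
    set c := (τ y)⁻¹ * y with hcdef
    have hc : τ c = c⁻¹ := by
      rw [hcdef, map_mul, map_inv, hτ]; group
    have h2c : c ^ k * c ^ k = c := by
      rw [← pow_add]
      have : k + k = Nat.card Q + 1 := by omega
      rw [this, pow_succ, pow_card_eq_one', one_mul]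
    have h4 : c ^ k = c * (c ^ k)⁻¹ := by
      rw [eq_mul_inv_iff_mul_eq]; exact h2c
    have h3 : τ y * c = y := by rw [hcdef]; group
    have key : τ y * c ^ k = y * (c ^ k)⁻¹ := by
      rw [eq_comm, mul_inv_eq_iff_eq_mul, mul_assoc, h2c, h3]
    show τ (y * ((c ^ k))⁻¹) = y * (c ^ k)⁻¹
    rw [map_mul, map_inv, map_pow, hc, inv_pow, inv_inv]
    exact key

/-- Let `G` be a `σ`-pro-`p`-group, `N` a `σ`-invariant open
normal subgroup and `ε ∈ {+1, −1}`. The measure `μ_{G^ε}` is realized as a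
measure `μGε` on `G`: for `ε = 1` it is the pushforward to `G` of the Haar
probability measure `μp` on the compact group `G⁺`, and for `ε = −1` it is the
pushforward of the Haar probability measure `μG` of `G` under the second
component of the inverse of the multiplication homeomorphism
`e : G⁺ × G⁻ ≃ₜ G`. Then the projection `G → G/N` restricts to a surjective
map `G^ε → (G/N)^ε`, the preimage in `G^ε` of each single element of
`(G/N)^ε` has `μ_{G^ε}`-measure equal to `μ_{G^ε}(N^ε)`, and
`μ_{G^ε}(N^ε) > 0`. Here `σbar` is the automorphism of `G/N` induced by `σ`. -/
theorem sigma_pro_p_group_open_quotient_fibers_measure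
    {p : ℕ} (hp : p.Prime) (hodd : Odd p)
    {G : Type*} [Group G] [TopologicalSpace G] [IsTopologicalGroup G]
    [CompactSpace G] [T2Space G] [TotallyDisconnectedSpace G]
    [MeasurableSpace G] [BorelSpace G]
    (hGpro : ∀ U : Subgroup G, U.Normal → IsOpen (U : Set G) → ∃ n : ℕ, U.index = p ^ n)
    (σ : G ≃* G) (hσcont : Continuous σ) (hσ : ∀ a, σ (σ a) = a)
    (μG : Measure G) [μG.IsHaarMeasure] [IsProbabilityMeasure μG] [μG.Regular]
    (Gp : Subgroup G) (hGp : ∀ a : G, a ∈ Gp ↔ σ a = a)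
    (μp : Measure Gp) [μp.IsHaarMeasure] [IsProbabilityMeasure μp] [μp.Regular]
    (e : (Gp × {a : G // σ a = a⁻¹}) ≃ₜ G)
    (he : ∀ x : Gp × {a : G // σ a = a⁻¹}, e x = (x.1 : G) * (x.2 : G))
    (N : Subgroup G) [N.Normal] (hNopen : IsOpen (N : Set G))
    (hNσ : ∀ a, σ a ∈ N ↔ a ∈ N)
    (σbar : G ⧸ N →* G ⧸ N) (hσbar : ∀ g : G, σbar (g : G ⧸ N) = ((σ g : G) : G ⧸ N))
    (ε : ℤ) (hε : ε = 1 ∨ ε = -1)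
    (μGε : Measure G)
    (hμGε : (ε = 1 ∧ μGε = Measure.map (fun a : Gp => (a : G)) μp) ∨
            (ε = -1 ∧ μGε = Measure.map (fun g : G => ((e.symm g).2 : G)) μG)) :
    Set.MapsTo (fun g : G => (g : G ⧸ N)) {a : G | σ a = a ^ ε}
      {x : G ⧸ N | σbar x = x ^ ε} ∧
    Set.SurjOn (fun g : G => (g : G ⧸ N)) {a : G | σ a = a ^ ε}
      {x : G ⧸ N | σbar x = x ^ ε} ∧
    (∀ x : G ⧸ N, σbar x = x ^ ε →
      μGε {a : G | σ a = a ^ ε ∧ (a : G ⧸ N) = x} =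
        μGε ((N : Set G) ∩ {a : G | σ a = a ^ ε})) ∧
    0 < μGε ((N : Set G) ∩ {a : G | σ a = a ^ ε}) := by
  haveI hBorelGp : BorelSpace Gp := Subtype.borelSpace (Gp : Set G)
  haveI hfin : Finite (G ⧸ N) := N.quotient_finite_of_isOpen hNopen
  have hoddQ : Odd (Nat.card (G ⧸ N)) := by
    obtain ⟨n, hn⟩ := hGpro N inferInstance hNopen
    have hcard : Nat.card (G ⧸ N) = p ^ n := by rw [← Subgroup.index_eq_card, hn]
    rw [hcard]; exact hodd.pow
  have hτinv : ∀ x : G ⧸ N, σbar (σbar x) = x := by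
    intro x; obtain ⟨g, rfl⟩ := QuotientGroup.mk_surjective x
    rw [hσbar, hσbar, hσ]
  obtain ⟨B, hB1, hB2, hB3⟩ := oddB hoddQ σbar hτinv
  have hQeven : ∀ a : G, σ a = a → σbar ((a : G ⧸ N)) = ((a : G ⧸ N)) := by
    intro a h; rw [hσbar, h]
  have hQodd : ∀ a : G, σ a = a⁻¹ → σbar ((a : G ⧸ N)) = ((a : G ⧸ N))⁻¹ := by
    intro a h; rw [hσbar, h]; simp
  have hdec : ∀ g : G, ((e.symm g).1 : G) * ((e.symm g).2 : G) = g := by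
    intro g; rw [← he]; exact e.apply_symm_apply g
  have key : ∀ g : G, (((e.symm g).2 : G) : G ⧸ N) = B (g : G ⧸ N) := by
    intro g
    conv_rhs => rw [← hdec g]
    rw [QuotientGroup.mk_mul,
      hB1 _ _ (hQeven _ ((hGp _).1 (e.symm g).1.2)) (hQodd _ (e.symm g).2.2)]
  have hB1' : ∀ x : G ⧸ N, σbar x = x → B x = 1 := by
    intro x hx
    have h := hB1 x 1 hx (by simp)
    simpa using h
  have hBodd : ∀ x : G ⧸ N, σbar x = x⁻¹ → B x = x := by
    intro x hx
    have h := hB1 1 x (by simp) hx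
    simpa using h
  have hsurj_even : ∀ x : G ⧸ N, σbar x = x → ∃ a : Gp, ((a : G) : G ⧸ N) = x := by
    intro x hx
    obtain ⟨g, rfl⟩ := QuotientGroup.mk_surjective x
    refine ⟨(e.symm g).1, ?_⟩
    have h2 : (((e.symm g).2 : G) : G ⧸ N) = 1 := by rw [key g, hB1' _ hx]
    conv_rhs => rw [← hdec g]
    rw [QuotientGroup.mk_mul, h2, mul_one]
  have hsurj_odd : ∀ x : G ⧸ N, σbar x = x⁻¹ → ∃ b : G, σ b = b⁻¹ ∧ ((b : G ⧸ N)) = x := by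
    intro x hx
    obtain ⟨g, rfl⟩ := QuotientGroup.mk_surjective x
    exact ⟨((e.symm g).2 : G), (e.symm g).2.2, by rw [key g, hBodd _ hx]⟩
  have hopenN : ∀ (x : G ⧸ N) (a₀ : G), ((a₀ : G ⧸ N)) = x → IsOpen {a : G | (a : G ⧸ N) = x} := by
    intro x a₀ h
    have hset : {a : G | (a : G ⧸ N) = x} = (fun a : G => a₀⁻¹ * a) ⁻¹' (N : Set G) := by
      ext a
      simp only [Set.mem_setOf_eq, Set.mem_preimage, SetLike.mem_coe]
      rw [← h]
      exact ⟨fun hh => QuotientGroup.eq.mp hh.symm, fun hh => (QuotientGroup.eq.mpr hh).symm⟩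
    rw [hset]
    exact hNopen.preimage (continuous_const.mul continuous_id)
  rcases hμGε with ⟨hε1, hμ⟩ | ⟨hε1, hμ⟩
  · subst hε1
    subst hμ
    simp only [zpow_one]
    have hclosed : IsClosed {a : G | σ a = a} := isClosed_eq hσcont continuous_id
    have hmeas : Measurable (fun a : Gp => (a : G)) := continuous_subtype_val.measurable
    have hS2 : MeasurableSet ((N : Set G) ∩ {a : G | σ a = a}) :=
      hNopen.measurableSet.inter hclosed.measurableSet
    have hNpre : (fun a : Gp => (a : G)) ⁻¹' ((N : Set G) ∩ {a : G | σ a = a})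
        = (fun a : Gp => (a : G)) ⁻¹' (N : Set G) := by
      ext u
      simp only [Set.mem_preimage, Set.mem_inter_iff, Set.mem_setOf_eq, SetLike.mem_coe,
        and_iff_left_iff_imp]
      intro _
      exact (hGp _).1 u.2
    refine ⟨?_, ?_, ?_, ?_⟩
    · intro a ha; exact hQeven a ha
    · intro x hx
      obtain ⟨a, ha⟩ := hsurj_even x hx
      exact ⟨(a : G), (hGp _).1 a.2, ha⟩
    · intro x hx
      obtain ⟨a₀, ha₀⟩ := hsurj_even x hx
      have hS1 : MeasurableSet {a : G | σ a = a ∧ (a : G ⧸ N) = x} := by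
        rw [Set.setOf_and]
        exact hclosed.measurableSet.inter (hopenN x _ ha₀).measurableSet
      rw [Measure.map_apply hmeas hS1, Measure.map_apply hmeas hS2]
      have hpre : (fun a : Gp => (a : G)) ⁻¹' {a : G | σ a = a ∧ (a : G ⧸ N) = x}
          = (fun u : Gp => a₀⁻¹ * u) ⁻¹'
              ((fun a : Gp => (a : G)) ⁻¹' ((N : Set G) ∩ {a : G | σ a = a})) := by
        ext u
        simp only [Set.mem_preimage, Set.mem_setOf_eq, Set.mem_inter_iff, SetLike.mem_coe]
        have hu : σ (u : G) = u := (hGp _).1 u.2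
        constructor
        · rintro ⟨-, h2⟩
          refine ⟨?_, (hGp _).1 (a₀⁻¹ * u).2⟩
          have h3 : ((a₀ : G))⁻¹ * (u : G) ∈ N := QuotientGroup.eq.mp (ha₀.trans h2.symm)
          simpa using h3
        · rintro ⟨h1, -⟩
          refine ⟨hu, ?_⟩
          have h3 : ((a₀ : G))⁻¹ * (u : G) ∈ N := by simpa using h1
          rw [← ha₀]
          exact (QuotientGroup.eq.mpr h3).symm
      rw [hpre, measure_preimage_mul]
    · rw [Measure.map_apply hmeas hS2, hNpre]
      refine (hNopen.preimage continuous_subtype_val).measure_pos μp ⟨1, ?_⟩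
      simp only [Set.mem_preimage, SetLike.mem_coe, OneMemClass.coe_one]
      exact N.one_mem
  · subst hε1
    subst hμ
    simp only [zpow_neg, zpow_one]
    have hclosed : IsClosed {a : G | σ a = a⁻¹} := isClosed_eq hσcont continuous_inv
    have hrcont : Continuous (fun g : G => ((e.symm g).2 : G)) :=
      continuous_subtype_val.comp (continuous_snd.comp e.symm.continuous)
    have hrmeas : Measurable (fun g : G => ((e.symm g).2 : G)) := hrcont.measurable
    haveI hRI : μG.IsMulRightInvariant := by
      constructor
      intro g
      have hmg : Measurable (fun x : G => x * g) := measurable_mul_const g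
      haveI h1 : IsProbabilityMeasure (Measure.map (fun x : G => x * g) μG) :=
        Measure.isProbabilityMeasure_map hmg.aemeasurable
      haveI h2 : (Measure.map (fun x : G => x * g) μG).IsOpenPosMeasure := by
        refine ⟨fun U hU hne => ?_⟩
        rw [Measure.map_apply hmg hU.measurableSet]
        refine (hU.preimage (continuous_mul_right g)).measure_ne_zero μG ?_
        obtain ⟨u, hu⟩ := hne
        exact ⟨u * g⁻¹, by simpa using hu⟩
      haveI h3 : (Measure.map (fun x : G => x * g) μG).IsHaarMeasure :=
        ⟨⟩
      exact Measure.isHaarMeasure_eq_of_isProbabilityMeasure _ _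
    have hS2 : MeasurableSet ((N : Set G) ∩ {a : G | σ a = a⁻¹}) :=
      hNopen.measurableSet.inter hclosed.measurableSet
    have hNset : (fun g : G => ((e.symm g).2 : G)) ⁻¹' ((N : Set G) ∩ {a : G | σ a = a⁻¹})
        = {g : G | B (g : G ⧸ N) = 1} := by
      ext g
      simp only [Set.mem_preimage, Set.mem_inter_iff, Set.mem_setOf_eq, SetLike.mem_coe]
      constructor
      · rintro ⟨h1, -⟩
        rw [← key g]
        exact (QuotientGroup.eq_one_iff _).mpr h1
      · intro h
        refine ⟨(QuotientGroup.eq_one_iff _).mp ?_, (e.symm g).2.2⟩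
        rw [key g]; exact h
    refine ⟨?_, ?_, ?_, ?_⟩
    · intro a ha; exact hQodd a ha
    · intro x hx
      obtain ⟨b, hb1, hb2⟩ := hsurj_odd x hx
      exact ⟨b, hb1, hb2⟩
    · intro x hx
      obtain ⟨g₀, hg₀odd, hg₀⟩ := hsurj_odd x hx
      have hS1 : MeasurableSet {a : G | σ a = a⁻¹ ∧ (a : G ⧸ N) = x} := by
        rw [Set.setOf_and]
        exact hclosed.measurableSet.inter (hopenN x _ hg₀).measurableSet
      have hBset : (fun g : G => ((e.symm g).2 : G)) ⁻¹' {a : G | σ a = a⁻¹ ∧ (a : G ⧸ N) = x}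
          = {g : G | B (g : G ⧸ N) = x} := by
        ext g
        simp only [Set.mem_preimage, Set.mem_setOf_eq]
        constructor
        · rintro ⟨-, h2⟩; rw [← key g]; exact h2
        · intro h; exact ⟨(e.symm g).2.2, by rw [key g]; exact h⟩
      rw [Measure.map_apply hrmeas hS1, Measure.map_apply hrmeas hS2, hBset, hNset]
      have htrans : {g : G | B (g : G ⧸ N) = x}
          = (fun h : G => h * g₀⁻¹) ⁻¹' {g : G | B (g : G ⧸ N) = 1} := by
        ext g
        simp only [Set.mem_setOf_eq, Set.mem_preimage]
        have hcast : ((g * g₀⁻¹ : G) : G ⧸ N) = (g : G ⧸ N) * x⁻¹ := by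
          rw [QuotientGroup.mk_mul, QuotientGroup.mk_inv, hg₀]
        rw [hcast]
        constructor
        · intro h
          rw [← h]
          have hB1app := hB1 ((g : G ⧸ N) * (B (g : G ⧸ N))⁻¹) 1 (hB3 (g : G ⧸ N)) (by simp)
          simpa using hB1app
        · intro h
          have heven := hB2 _ h
          have hB1app := hB1 ((g : G ⧸ N) * x⁻¹) x heven hx
          simpa using hB1app
      rw [htrans, measure_preimage_mul_right]
    · rw [Measure.map_apply hrmeas hS2, hNset]
      have hsub : (N : Set G) ⊆ {g : G | B (g : G ⧸ N) = 1} := by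
        intro g hg
        have h1 : (g : G ⧸ N) = 1 := (QuotientGroup.eq_one_iff g).mpr hg
        have h2 := hB1 (1 : G ⧸ N) 1 (map_one σbar) (by simp)
        simp only [Set.mem_setOf_eq, h1]
        simpa using h2
      calc (0 : ENNReal) < μG (N : Set G) := hNopen.measure_pos μG ⟨1, N.one_mem⟩
        _ ≤ _ := measure_mono hsub
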